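/- arXiv:2111.03137 — 6 statements merged into one kernel-verified Lean document; each statement's English description precedes it below -/
import Mathlib

section
/- Define γ_i recursively by the BSLS iteration counts: suppose T_1 ≥ κ₁·log((f₀ - f*)/ε) and T_i ≥ κ_i·(2·log κ̄ + 1) for i ≥ 2, with κ_i ≥ 1 and κ̄ ≥ 1. Set γ_1 = -T_1/κ₁ and γ_i = 2·log κ̄·Σ_{j=1}^{i-1} T_j·∏_{k=1}^{j-1}(T_k+1) - (T_i/κ_i)·∏_{j=1}^{i-1}(T_j+1). Then γ_m ≤ γ_{m-1} ≤ ... ≤ γ_1 ≤ log(ε/(f₀ - f*)). -/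
/-- The key estimate in the BSLS convergence proof: with iteration counts
`T_1 ≥ κ₁·log((f₀ - f*)/ε)`, `T_i ≥ κ_i·(2 log κ̄ + 1)` for `i ≥ 2`, the exponents
`γ_i = 2 log κ̄ · Σ_{j<i} T_j ∏_{k<j}(T_k+1) - (T_i/κ_i)·∏_{j<i}(T_j+1)`
satisfy `γ_m ≤ γ_{m-1} ≤ … ≤ γ_1 ≤ log(ε/(f₀ - f*))`. (Indices are zero-based.) -/
theorem stmt5 (m : ℕ) (κ T : ℕ → ℝ) (κbar ε f0 fstar : ℝ)
    (hκ : ∀ i < m, 1 ≤ κ i) (hκbar : 1 ≤ κbar) (hε : 0 < ε) (hΔ : 0 < f0 - fstar)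
    (hT1 : T 0 ≥ κ 0 * Real.log ((f0 - fstar) / ε))
    (hTi : ∀ i, 1 ≤ i → i < m → T i ≥ κ i * (2 * Real.log κbar + 1))
    (hTpos : ∀ i < m, 0 < T i)
    (γ : ℕ → ℝ)
    (hγ : ∀ i, γ i = 2 * Real.log κbar *
        (∑ j ∈ Finset.range i, T j * ∏ k ∈ Finset.range j, (T k + 1))
        - (T i / κ i) * ∏ j ∈ Finset.range i, (T j + 1)) :
    (∀ i, i + 1 < m → γ (i + 1) ≤ γ i) ∧ (0 < m → γ 0 ≤ Real.log (ε / (f0 - fstar))) := by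
  have hL : 0 ≤ Real.log κbar := Real.log_nonneg hκbar
  constructor
  · intro i hi1
    have him : i < m := by omega
    have hκi : 1 ≤ κ i := hκ i him
    have hκi1 : 1 ≤ κ (i+1) := hκ (i+1) hi1
    have hTp : 0 < T i := hTpos i him
    have hP : 0 < ∏ j ∈ Finset.range i, (T j + 1) := by
      apply Finset.prod_pos
      intro j hj
      have := hTpos j (lt_trans (Finset.mem_range.mp hj) him)
      linarith
    set L := Real.log κbar
    set P := ∏ j ∈ Finset.range i, (T j + 1) with hPdef
    have hratio : T (i+1) / κ (i+1) ≥ 2 * L + 1 := by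
      rw [ge_iff_le, le_div_iff₀ (by linarith : (0:ℝ) < κ (i+1))]
      calc (2 * L + 1) * κ (i+1) = κ (i+1) * (2 * L + 1) := by ring
        _ ≤ T (i+1) := hTi (i+1) (by omega) hi1
    have hratio2 : T i / κ i ≤ T i := by
      rw [div_le_iff₀ (by linarith : (0:ℝ) < κ i)]
      nlinarith
    rw [hγ (i+1), hγ i, Finset.sum_range_succ, Finset.prod_range_succ]
    have key : (T (i+1) / κ (i+1)) * ((T i + 1) * P) ≥
        2 * L * (T i * P) + (T i / κ i) * P := by
      have h1 : (2 * L + 1) * ((T i + 1) * P) ≤ (T (i+1) / κ (i+1)) * ((T i + 1) * P) := by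
        apply mul_le_mul_of_nonneg_right hratio
        positivity
      nlinarith [mul_le_mul_of_nonneg_right hratio2 hP.le, hP, hL]
    rw [← hPdef]
    linarith
  · intro hm
    have hκ0 : 1 ≤ κ 0 := hκ 0 hm
    have : Real.log (ε / (f0 - fstar)) = - Real.log ((f0 - fstar) / ε) := by
      rw [← Real.log_inv, inv_div]
    rw [hγ 0, this]
    simp only [Finset.range_zero, Finset.sum_empty, Finset.prod_empty, mul_zero, mul_one,
      zero_sub, neg_le_neg_iff]
    rw [le_div_iff₀ (by linarith : (0:ℝ) < κ 0)]
    calc Real.log ((f0 - fstar) / ε) * κ 0 = κ 0 * Real.log ((f0 - fstar) / ε) := by ring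
      _ ≤ T 0 := hT1
end

section
/- There exists a quadratic function f : ℝ² → ℝ of the form f(x) = (1/2)(μ₁ x₁² + μ₂ x₂²) with 0 < μ₁ < μ₂ (specifically μ₁ = 1, μ₂ = 10), points x⁰, v⁰ ∈ ℝ², and parameters L₂ > μ₂' > μ₂ (specifically L₂ = 200, μ₂' = 100) such that one step of accelerated gradient descent with parameters (L₂, μ₂') strictly increases the Lyapunov potential ψ(x, v) = f(x) - f* + (μ₁/2)·‖v - x*‖². Concretely, with f(x) = 0.5 x₁² + 5 x₂², x⁰ = (0,0), v⁰ = (1,1): ψ(x⁰, v⁰) = 1, but after one AGD step with κ = 2, α = √2/(√2+1), β = 1 - 1/√2, y = αx + (1-α)v, v⁺ = βv + (1-β)(y - (1/100)∇f(y)), x⁺ = y - (1/200)∇f(y), we have ψ(x⁺, v⁺) > 1.18. -/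
/-- The AGD potential `ψ(x,v) = f(x) - f* + (μ₁/2)‖v - x*‖²` is not conservative under an
AGD step with larger parameters: for `f(x) = 0.5 x₁² + 5 x₂²` (so `f* = 0`, `x* = 0`,
`μ₁ = 1`), starting from `x⁰ = (0,0)`, `v⁰ = (1,1)`, one AGD step with parameters
`L₂ = 200`, `μ₂' = 100` (so `κ = 2`) yields `ψ(x⁰,v⁰) = 1` but `ψ(x⁺,v⁺) > 1.18`. -/
theorem stmt6 :
    let f : ℝ → ℝ → ℝ := fun x1 x2 => 0.5 * x1 ^ 2 + 5 * x2 ^ 2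
    let ψ : ℝ → ℝ → ℝ → ℝ → ℝ :=
      fun x1 x2 v1 v2 => f x1 x2 - 0 + (1 : ℝ) / 2 * ((v1 - 0) ^ 2 + (v2 - 0) ^ 2)
    let κ : ℝ := 200 / 100
    let α : ℝ := Real.sqrt κ / (Real.sqrt κ + 1)
    let β : ℝ := 1 - 1 / Real.sqrt κ
    -- x⁰ = (0,0), v⁰ = (1,1); y = α x⁰ + (1-α) v⁰
    let y1 : ℝ := α * 0 + (1 - α) * 1
    let y2 : ℝ := α * 0 + (1 - α) * 1
    -- ∇f(y) = (y₁, 10 y₂)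
    let g1 : ℝ := y1
    let g2 : ℝ := 10 * y2
    -- v⁺ = β v⁰ + (1-β)(y - (1/100) ∇f(y)),  x⁺ = y - (1/200) ∇f(y)
    let v1 : ℝ := β * 1 + (1 - β) * (y1 - (1 / 100) * g1)
    let v2 : ℝ := β * 1 + (1 - β) * (y2 - (1 / 100) * g2)
    let x1 : ℝ := y1 - (1 / 200) * g1
    let x2 : ℝ := y2 - (1 / 200) * g2
    ψ 0 0 1 1 = 1 ∧ ψ x1 x2 v1 v2 > 1.18 := by
  intro f ψ κ α β y1 y2 g1 g2 v1 v2 x1 x2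
  have heq : Real.sqrt κ = Real.sqrt 2 := by norm_num [κ]
  have hs2 : Real.sqrt 2 ^ 2 = 2 := Real.sq_sqrt (by norm_num)
  have hs1 : (1.414 : ℝ) < Real.sqrt 2 := by
    nlinarith [hs2, Real.sqrt_nonneg 2]
  have hs1' : Real.sqrt 2 < 1.4143 := by
    nlinarith [hs2, Real.sqrt_nonneg 2]
  have hspos : (0:ℝ) < Real.sqrt 2 := by linarith
  constructor
  · norm_num [ψ, f]
  · simp only [ψ, f, x1, x2, v1, v2, y1, y2, g1, g2, α, β, heq]
    set s := Real.sqrt 2 with hs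
    have h1 : s + 1 ≠ 0 := by positivity
    have h2 : s ≠ 0 := by positivity
    rw [gt_iff_lt, show (1.18:ℝ) = 118/100 by norm_num]
    field_simp
    nlinarith [hs2, hs1, hs1', sq_nonneg (s - 1.414), sq_nonneg s, mul_pos hspos hspos]
end

section
/- For gradient descent with exact line search on a quadratic f(x) = (1/2)xᵀAx - bᵀx with A = diag(λ₁, λ₂), 0 < λ₁ < λ₂, b = (1,1), starting at x⁰ = 0: at every iteration t, the ratio of the gradient components satisfies (∇f(x^t))₁² = (∇f(x^t))₂², i.e., p_t := ∏_{ℓ=1}^t ((1 - s_ℓλ₁)/(1 - s_ℓλ₂))² = 1 for all t, where s_ℓ is the exact line-search step size at iteration ℓ. Consequently each step contracts the error by exactly the factor 1 - 4κ̄/(κ̄+1)², where κ̄ = λ₂/λ₁. -/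
/-- For gradient descent with exact line search on the quadratic
`f(x) = ½(λ₁x₁² + λ₂x₂²) - x₁ - x₂` with `0 < λ₁ < λ₂`, started at `x⁰ = 0`:
at every iteration the squared gradient components are equal, the products
`p_t = ∏_{ℓ<t} ((1 - s_ℓλ₁)/(1 - s_ℓλ₂))²` equal `1`, and each step contracts the
function error by exactly the factor `1 - 4κ̄/(κ̄+1)²`, where `κ̄ = λ₂/λ₁`. -/
theorem stmt8 (lam1 lam2 : ℝ) (h1 : 0 < lam1) (h12 : lam1 < lam2)
    (x : ℕ → ℝ × ℝ) (g : ℕ → ℝ × ℝ) (s : ℕ → ℝ)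
    (hg : ∀ t, g t = (lam1 * (x t).1 - 1, lam2 * (x t).2 - 1))
    (hs : ∀ t, s t = ((g t).1 ^ 2 + (g t).2 ^ 2) /
        (lam1 * (g t).1 ^ 2 + lam2 * (g t).2 ^ 2))
    (hx0 : x 0 = (0, 0))
    (hstep : ∀ t, x (t + 1) = ((x t).1 - s t * (g t).1, (x t).2 - s t * (g t).2)) :
    (∀ t, ((g t).1) ^ 2 = ((g t).2) ^ 2) ∧
    (∀ t, ∏ ℓ ∈ Finset.range t, ((1 - s ℓ * lam1) / (1 - s ℓ * lam2)) ^ 2 = 1) ∧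
    (∀ t,
      let f : ℝ × ℝ → ℝ := fun p => (1 / 2) * (lam1 * p.1 ^ 2 + lam2 * p.2 ^ 2) - p.1 - p.2
      f (x (t + 1)) - f (1 / lam1, 1 / lam2) =
        (1 - 4 * (lam2 / lam1) / (lam2 / lam1 + 1) ^ 2) *
          (f (x t) - f (1 / lam1, 1 / lam2))) := by
  have h2 : (0:ℝ) < lam2 := lt_trans h1 h12
  have hsum : (0:ℝ) < lam1 + lam2 := by linarith
  have hsne : lam1 + lam2 ≠ 0 := ne_of_gt hsum
  have hd : (0:ℝ) < lam2 - lam1 := by linarith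
  set A : ℝ := (lam2 - lam1) / (lam1 + lam2) with hA
  have hApos : 0 < A := div_pos hd hsum
  -- main induction
  have key : ∀ t, (g t).1 ^ 2 = (g t).2 ^ 2 ∧ 0 < (g t).1 ^ 2 ∧
      s t = 2 / (lam1 + lam2) := by
    intro t
    induction t with
    | zero =>
      have hgz : g 0 = (-1, -1) := by rw [hg 0, hx0]; norm_num
      refine ⟨by rw [hgz], by rw [hgz]; norm_num, ?_⟩
      rw [hs 0, hgz]
      norm_num
    | succ t ih =>
      obtain ⟨heq, hpos, hst⟩ := ih
      have hfac1 : 1 - s t * lam1 = A := by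
        rw [hst, hA]; field_simp; ring
      have hfac2 : 1 - s t * lam2 = -A := by
        rw [hst, hA]; field_simp; ring
      have h1' : (g (t+1)).1 = A * (g t).1 := by
        simp only [hg, hstep]
        rw [show lam1 * ((x t).1 - s t * (lam1 * (x t).1 - 1)) - 1
            = (1 - s t * lam1) * (lam1 * (x t).1 - 1) by ring, hfac1]
      have h2' : (g (t+1)).2 = -A * (g t).2 := by
        simp only [hg, hstep]
        rw [show lam2 * ((x t).2 - s t * (lam2 * (x t).2 - 1)) - 1
            = (1 - s t * lam2) * (lam2 * (x t).2 - 1) by ring, hfac2]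
      have heq' : (g (t+1)).1 ^ 2 = (g (t+1)).2 ^ 2 := by
        rw [h1', h2']; linear_combination A ^ 2 * heq
      have hpos' : 0 < (g (t+1)).1 ^ 2 := by
        rw [h1', mul_pow]; exact mul_pos (pow_pos hApos 2) hpos
      refine ⟨heq', hpos', ?_⟩
      rw [hs (t+1), ← heq']
      rw [div_eq_div_iff (by nlinarith) hsne]; ring
  -- gradient recursion facts
  have hfac1 : ∀ t, 1 - s t * lam1 = A := by
    intro t; rw [(key t).2.2, hA]; field_simp; ring
  have hfac2 : ∀ t, 1 - s t * lam2 = -A := by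
    intro t; rw [(key t).2.2, hA]; field_simp; ring
  have h1' : ∀ t, (g (t+1)).1 = A * (g t).1 := by
    intro t
    simp only [hg, hstep]
    rw [show lam1 * ((x t).1 - s t * (lam1 * (x t).1 - 1)) - 1
        = (1 - s t * lam1) * (lam1 * (x t).1 - 1) by ring, hfac1]
  have h2' : ∀ t, (g (t+1)).2 = -A * (g t).2 := by
    intro t
    simp only [hg, hstep]
    rw [show lam2 * ((x t).2 - s t * (lam2 * (x t).2 - 1)) - 1
        = (1 - s t * lam2) * (lam2 * (x t).2 - 1) by ring, hfac2]
  refine ⟨fun t => (key t).1, ?_, ?_⟩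
  · intro t
    apply Finset.prod_eq_one
    intro l _
    rw [hfac1 l, hfac2 l, div_neg, div_self (ne_of_gt hApos)]
    ring
  · intro t
    have hf : ∀ u, (1 / 2) * (lam1 * (x u).1 ^ 2 + lam2 * (x u).2 ^ 2) - (x u).1 - (x u).2
        - ((1 / 2) * (lam1 * (1/lam1) ^ 2 + lam2 * (1/lam2) ^ 2) - 1/lam1 - 1/lam2)
        = (g u).1 ^ 2 / (2 * lam1) + (g u).2 ^ 2 / (2 * lam2) := by
      intro u
      have hl1 : lam1 ≠ 0 := ne_of_gt h1
      have hl2 : lam2 ≠ 0 := ne_of_gt h2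
      simp only [hg]
      field_simp
      ring
    have hk : (0:ℝ) < lam2 / lam1 := div_pos h2 h1
    have hX : 4 * (lam2 / lam1) / (lam2 / lam1 + 1) ^ 2 = 4 * lam1 * lam2 / (lam1 + lam2) ^ 2 := by
      rw [div_eq_div_iff (ne_of_gt (pow_pos (by linarith : (0:ℝ) < lam2 / lam1 + 1) 2)) (ne_of_gt (pow_pos hsum 2))]
      have hl1 : lam1 ≠ 0 := ne_of_gt h1
      field_simp
      ring
    have hC : 1 - 4 * (lam2 / lam1) / (lam2 / lam1 + 1) ^ 2 = A ^ 2 := by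
      rw [hX, hA, div_pow, eq_div_iff (pow_ne_zero 2 hsne), sub_mul,
        div_mul_cancel₀ _ (pow_ne_zero 2 hsne)]
      ring
    dsimp only
    rw [hf (t+1), hf t, hC, h1' t, h2' t]
    ring
end

section
/- Let T_d denote the degree-d Chebyshev polynomial of the first kind. For real x with |x| ≥ 1: (1/2)·(1 + √(2(|x| - 1)))^d ≤ |T_d(x)| ≤ |2x|^d, and |T_d(x)| is monotonically increasing in |x| on [1, ∞). -/
open Polynomial Chebyshev

lemma sqrt_sq_sub_le (y : ℝ) (hy : 1 ≤ y) : Real.sqrt (y^2-1) ≤ y := by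
  have h : Real.sqrt (y^2-1) ≤ Real.sqrt (y^2) := Real.sqrt_le_sqrt (by nlinarith)
  rwa [Real.sqrt_sq (by linarith)] at h

lemma eval_T_formula (y : ℝ) (hy : 1 ≤ y) (d : ℕ) :
    (Polynomial.Chebyshev.T ℝ d).eval y =
      ((y + Real.sqrt (y^2 - 1))^d + (y - Real.sqrt (y^2 - 1))^d) / 2 := by
  have hs : Real.sqrt (y^2 - 1) ^ 2 = y^2 - 1 :=
    Real.sq_sqrt (by nlinarith)
  set s := Real.sqrt (y^2 - 1)
  induction d using Nat.strong_induction_on with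
  | _ d ih =>
    match d with
    | 0 => simp [Polynomial.Chebyshev.T_zero]
    | 1 => simp [Polynomial.Chebyshev.T_one]
    | (n+2) =>
      have h2 : ((n:ℤ) + 2) = ((n+2 : ℕ) : ℤ) := by push_cast; ring
      have h1 : ((n:ℤ) + 1) = ((n+1 : ℕ) : ℤ) := by push_cast; ring
      have := Polynomial.Chebyshev.T_add_two ℝ (n : ℤ)
      rw [h2, h1] at this
      rw [this]
      simp only [Polynomial.eval_sub, Polynomial.eval_mul, Polynomial.eval_ofNat,
        Polynomial.eval_X]
      rw [ih n (by omega), ih (n+1) (by omega)]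
      have e1 : (y+s)^(n+2) = (y+s)^n * (y+s)^2 := by ring
      have e2 : (y-s)^(n+2) = (y-s)^n * (y-s)^2 := by ring
      have e3 : (y+s)^(n+1) = (y+s)^n * (y+s) := by ring
      have e4 : (y-s)^(n+1) = (y-s)^n * (y-s) := by ring
      rw [e1, e2, e3, e4]
      linear_combination (-((y+s)^n + (y-s)^n)/2) * hs

lemma eval_T_parity (y : ℝ) (d : ℕ) :
    (Polynomial.Chebyshev.T ℝ d).eval (-y) = (-1)^d * (Polynomial.Chebyshev.T ℝ d).eval y := by
  induction d using Nat.strong_induction_on with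
  | _ d ih =>
    match d with
    | 0 => simp [Polynomial.Chebyshev.T_zero]
    | 1 => simp [Polynomial.Chebyshev.T_one]
    | (n+2) =>
      have h2 : ((n:ℤ) + 2) = ((n+2 : ℕ) : ℤ) := by push_cast; ring
      have h1 : ((n:ℤ) + 1) = ((n+1 : ℕ) : ℤ) := by push_cast; ring
      have := Polynomial.Chebyshev.T_add_two ℝ (n : ℤ)
      rw [h2, h1] at this
      rw [this]
      simp only [Polynomial.eval_sub, Polynomial.eval_mul, Polynomial.eval_ofNat,
        Polynomial.eval_X]
      rw [ih n (by omega), ih (n+1) (by omega)]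
      ring

/-- Bounds on the Chebyshev polynomial of the first kind outside `[-1,1]`:
for `|x| ≥ 1`, `(1/2)(1 + √(2(|x|-1)))^d ≤ |T_d(x)| ≤ |2x|^d`, and `|T_d|` is
monotonically increasing on `[1, ∞)`. -/
theorem stmt9 (d : ℕ) (x : ℝ) (hx : 1 ≤ |x|) :
    (1 / 2) * (1 + Real.sqrt (2 * (|x| - 1))) ^ d ≤
        |(Polynomial.Chebyshev.T ℝ d).eval x| ∧
    |(Polynomial.Chebyshev.T ℝ d).eval x| ≤ |2 * x| ^ d ∧
    (∀ y z : ℝ, 1 ≤ y → y ≤ z →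
      |(Polynomial.Chebyshev.T ℝ d).eval y| ≤ |(Polynomial.Chebyshev.T ℝ d).eval z|) := by
  -- generic facts for y ≥ 1
  have key : ∀ y : ℝ, 1 ≤ y → |(Polynomial.Chebyshev.T ℝ d).eval y| =
      ((y + Real.sqrt (y^2 - 1))^d + (y - Real.sqrt (y^2 - 1))^d) / 2 := by
    intro y hy
    rw [eval_T_formula y hy]
    have hs0 : 0 ≤ Real.sqrt (y^2-1) := Real.sqrt_nonneg _
    have hsy : Real.sqrt (y^2-1) ≤ y := sqrt_sq_sub_le y hy
    exact abs_of_nonneg (div_nonneg (add_nonneg (by positivity)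
      (pow_nonneg (by linarith) _)) (by norm_num))
  have habs : |(Polynomial.Chebyshev.T ℝ d).eval x| = |(Polynomial.Chebyshev.T ℝ d).eval (|x|)| := by
    rcases abs_choice x with h | h
    · rw [h]
    · have hx' : x = -|x| := by rw [h]; ring
      conv_lhs => rw [hx']
      rw [eval_T_parity, abs_mul, abs_pow, abs_neg, abs_one, one_pow, one_mul]
  constructor
  · -- lower bound
    rw [habs, key |x| hx]
    have hs0 : 0 ≤ Real.sqrt (|x|^2-1) := Real.sqrt_nonneg _
    have hsy : Real.sqrt (|x|^2-1) ≤ |x| := sqrt_sq_sub_le _ hx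
    have h1 : 1 + Real.sqrt (2*(|x|-1)) ≤ |x| + Real.sqrt (|x|^2-1) := by
      have : Real.sqrt (2*(|x|-1)) ≤ Real.sqrt (|x|^2-1) :=
        Real.sqrt_le_sqrt (by nlinarith)
      linarith
    have h2 : (1 + Real.sqrt (2*(|x|-1)))^d ≤ (|x| + Real.sqrt (|x|^2-1))^d := by
      apply pow_le_pow_left₀ (by positivity) h1
    have h3 : (0:ℝ) ≤ (|x| - Real.sqrt (|x|^2-1))^d := pow_nonneg (by linarith) _
    linarith
  constructor
  · -- upper bound
    rw [habs, key |x| hx, abs_mul]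
    have hs0 : 0 ≤ Real.sqrt (|x|^2-1) := Real.sqrt_nonneg _
    have hsy : Real.sqrt (|x|^2-1) ≤ |x| := sqrt_sq_sub_le _ hx
    have h1 : (|x| + Real.sqrt (|x|^2-1))^d ≤ (|(2:ℝ)| * |x|)^d :=
      pow_le_pow_left₀ (by positivity) (by rw [abs_two]; linarith) d
    have h2 : (|x| - Real.sqrt (|x|^2-1))^d ≤ (|(2:ℝ)| * |x|)^d :=
      pow_le_pow_left₀ (by linarith) (by rw [abs_two]; linarith) d
    calc ((|x| + Real.sqrt (|x|^2-1))^d + (|x| - Real.sqrt (|x|^2-1))^d)/2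
        ≤ ((|(2:ℝ)| * |x|)^d + (|(2:ℝ)| * |x|)^d)/2 := div_le_div_of_nonneg_right (add_le_add h1 h2) (by norm_num)
      _ = (|(2:ℝ)| * |x|)^d := by ring
  · -- monotonicity
    intro y z hy hyz
    have hz : (1:ℝ) ≤ z := le_trans hy hyz
    rw [key y hy, key z hz]
    set sy := Real.sqrt (y^2-1)
    set sz := Real.sqrt (z^2-1)
    have hsy2 : sy^2 = y^2 - 1 := Real.sq_sqrt (by nlinarith)
    have hsz2 : sz^2 = z^2 - 1 := Real.sq_sqrt (by nlinarith)
    have hsy0 : 0 ≤ sy := Real.sqrt_nonneg _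
    have hsz0 : 0 ≤ sz := Real.sqrt_nonneg _
    have hmono : sy ≤ sz := Real.sqrt_le_sqrt (by nlinarith)
    -- a := y + sy, c := z + sz, with a*(y - sy) = 1 etc
    have hab : (y + sy) * (y - sy) = 1 := by nlinarith
    have hce : (z + sz) * (z - sz) = 1 := by nlinarith
    have ha1 : (1:ℝ) ≤ y + sy := by linarith
    have hc1 : (1:ℝ) ≤ z + sz := by linarith
    have hac : y + sy ≤ z + sz := by linarith
    have hb0 : 0 ≤ y - sy := by
      nlinarith
    have he0 : 0 ≤ z - sz := by nlinarith
    -- pass to powers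
    set A := (y+sy)^d with hAdef
    set B := (y-sy)^d with hBdef
    set C := (z+sz)^d with hCdef
    set E := (z-sz)^d with hEdef
    have hA1 : (1:ℝ) ≤ A := by
      have := pow_le_pow_left₀ zero_le_one ha1 d
      simpa using this
    have hAC : A ≤ C := pow_le_pow_left₀ (by linarith) hac d
    have hAB : A * B = 1 := by rw [hAdef, hBdef, ← mul_pow, hab, one_pow]
    have hCE : C * E = 1 := by rw [hCdef, hEdef, ← mul_pow, hce, one_pow]
    have hA0 : (0:ℝ) < A := by linarith
    have hC0 : (0:ℝ) < C := by linarith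
    have h1 : (0:ℝ) ≤ (C - A) * (A*C - 1) :=
      mul_nonneg (by linarith) (by nlinarith)
    have h2 : A*B*C = C := by rw [hAB, one_mul]
    have h3 : C*E*A = A := by rw [hCE, one_mul]
    have : A + B ≤ C + E := by nlinarith [mul_pos hA0 hC0]
    linarith
end

section
/- Let S = ∪_{i=1}^m [μ_i, L_i] with 0 < μ₁ < L₁ < μ₂ < ... < μ_m < L_m, κ_i = L_i/μ_i ≥ 2, and κ̄ = L_m/μ₁. For any ε > 0 there exists a polynomial P with P(0) = 1, |P(x)| ≤ ε for all x ∈ S, and deg(P) ≤ C^m · (∏_{i=1}^m √κ_i) · (log κ̄)^{m-1} · log(1/ε) for an absolute constant C. -/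
open Polynomial Real

namespace Stmt11Aux

noncomputable def tch (d : ℕ) (y : ℝ) : ℝ := (Polynomial.Chebyshev.T ℝ (d : ℤ)).eval y

noncomputable def ach (y : ℝ) : ℝ := Real.log (y + Real.sqrt (y ^ 2 - 1))

lemma tch_zero (y : ℝ) : tch 0 y = 1 := by simp [tch]

lemma tch_one (y : ℝ) : tch 1 y = y := by simp [tch]

lemma tch_rec (d : ℕ) (y : ℝ) : tch (d + 2) y = 2 * y * tch (d + 1) y - tch d y := by
  unfold tch
  have h : ((d + 2 : ℕ) : ℤ) = (d : ℤ) + 2 := by push_cast; ring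
  rw [h, Polynomial.Chebyshev.T_add_two]
  push_cast
  simp [eval_sub, eval_mul]

lemma tch_cos (d : ℕ) (θ : ℝ) : tch d (Real.cos θ) = Real.cos (d * θ) := by
  have := Polynomial.Chebyshev.T_real_cos θ (d : ℤ)
  simpa [tch] using this

lemma tch_cosh (d : ℕ) (s : ℝ) : tch d (Real.cosh s) = Real.cosh (d * s) := by
  induction d using Nat.twoStepInduction with
  | zero => simp [tch_zero]
  | one => simp [tch_one]
  | more n ih1 ih2 =>
    rw [tch_rec, ih1, ih2]
    have h1 := Real.cosh_add (((n : ℝ) + 1) * s) s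
    have h2 := Real.cosh_sub (((n : ℝ) + 1) * s) s
    have e1 : ((n + 2 : ℕ) : ℝ) * s = ((n : ℝ) + 1) * s + s := by push_cast; ring
    have e2 : ((n : ℕ) : ℝ) * s = ((n : ℝ) + 1) * s - s := by ring
    have e3 : ((n + 1 : ℕ) : ℝ) * s = ((n : ℝ) + 1) * s := by push_cast; ring
    rw [e1, h1, e3] at *
    rw [e2, h2]
    ring


variable {y z : ℝ}

lemma ach_pos_arg (hy : 1 ≤ y) : 0 < y + Real.sqrt (y ^ 2 - 1) := by
  nlinarith [Real.sqrt_nonneg (y ^ 2 - 1)]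

lemma one_le_ach_arg (hy : 1 ≤ y) : 1 ≤ y + Real.sqrt (y ^ 2 - 1) := by
  nlinarith [Real.sqrt_nonneg (y ^ 2 - 1)]

lemma ach_nonneg (hy : 1 ≤ y) : 0 ≤ ach y := Real.log_nonneg (one_le_ach_arg hy)

lemma exp_ach (hy : 1 ≤ y) : Real.exp (ach y) = y + Real.sqrt (y ^ 2 - 1) :=
  Real.exp_log (ach_pos_arg hy)

lemma cosh_ach (hy : 1 ≤ y) : Real.cosh (ach y) = y := by
  have hs : Real.sqrt (y ^ 2 - 1) ^ 2 = y ^ 2 - 1 := Real.sq_sqrt (by nlinarith)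
  have hinv : (y + Real.sqrt (y ^ 2 - 1))⁻¹ = y - Real.sqrt (y ^ 2 - 1) := by
    have hmul : (y + Real.sqrt (y ^ 2 - 1)) * (y - Real.sqrt (y ^ 2 - 1)) = 1 := by nlinarith
    exact inv_eq_of_mul_eq_one_right hmul
  rw [Real.cosh_eq, exp_ach hy, Real.exp_neg, exp_ach hy, hinv]
  ring

lemma ach_mono (hy : 1 ≤ y) (hyz : y ≤ z) : ach y ≤ ach z := by
  have h1 : 1 ≤ z := le_trans hy hyz
  apply Real.log_le_log (ach_pos_arg hy)
  have : Real.sqrt (y ^ 2 - 1) ≤ Real.sqrt (z ^ 2 - 1) := Real.sqrt_le_sqrt (by nlinarith)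
  linarith

lemma sqrt_le_self_of_one_le (hy : 1 ≤ y) : Real.sqrt (y ^ 2 - 1) ≤ y := by
  have : Real.sqrt (y ^ 2 - 1) ≤ Real.sqrt (y ^ 2) := Real.sqrt_le_sqrt (by nlinarith)
  rwa [Real.sqrt_sq (by linarith)] at this

variable {y z : ℝ} {d : ℕ}

lemma tch_eq_cosh (hy : 1 ≤ y) : tch d y = Real.cosh (d * ach y) := by
  conv_lhs => rw [← cosh_ach hy, tch_cosh]

lemma one_le_tch (hy : 1 ≤ y) : 1 ≤ tch d y := by
  rw [tch_eq_cosh hy]; exact Real.one_le_cosh _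

lemma tch_mono (hy : 1 ≤ y) (hyz : y ≤ z) : tch d y ≤ tch d z := by
  rw [tch_eq_cosh hy, tch_eq_cosh (hy.trans hyz)]
  apply Real.cosh_le_cosh.2
  have h1 : 0 ≤ (d : ℝ) * ach y := mul_nonneg (Nat.cast_nonneg d) (ach_nonneg hy)
  have h2 : 0 ≤ (d : ℝ) * ach z := mul_nonneg (Nat.cast_nonneg d) (ach_nonneg (hy.trans hyz))
  rw [abs_of_nonneg h1, abs_of_nonneg h2]
  exact mul_le_mul_of_nonneg_left (ach_mono hy hyz) (Nat.cast_nonneg d)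

lemma tch_le_pow (hy : 1 ≤ y) : tch d y ≤ (2 * y) ^ d := by
  rw [tch_eq_cosh hy, Real.cosh_eq]
  have h1 : Real.exp (-((d : ℝ) * ach y)) ≤ Real.exp ((d : ℝ) * ach y) := by
    apply Real.exp_le_exp.2
    have := mul_nonneg (Nat.cast_nonneg (α := ℝ) d) (ach_nonneg hy)
    linarith
  have h2 : Real.exp ((d : ℝ) * ach y) ≤ (2 * y) ^ d := by
    rw [Real.exp_nat_mul, exp_ach hy]
    apply pow_le_pow_left₀ (by positivity)
    have := sqrt_le_self_of_one_le hy
    linarith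
  linarith

lemma le_tch (hy : 1 ≤ y) : (y + Real.sqrt (y ^ 2 - 1)) ^ d / 2 ≤ tch d y := by
  rw [tch_eq_cosh hy, Real.cosh_eq]
  have h2 : (y + Real.sqrt (y ^ 2 - 1)) ^ d = Real.exp ((d : ℝ) * ach y) := by
    rw [Real.exp_nat_mul, exp_ach hy]
  rw [h2]
  have := Real.exp_nonneg (-((d : ℝ) * ach y))
  linarith

lemma abs_tch_le_one (h1 : -1 ≤ y) (h2 : y ≤ 1) : |tch d y| ≤ 1 := by
  rw [← Real.cos_arccos h1 h2, tch_cos]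
  exact Real.abs_cos_le_one _

lemma tch_neg_arg (d : ℕ) (y : ℝ) : tch d (-y) = (-1) ^ d * tch d y := by
  induction d using Nat.twoStepInduction with
  | zero => simp [tch_zero]
  | one => simp [tch_one]
  | more n ih1 ih2 =>
    rw [tch_rec, tch_rec, ih1, ih2]
    ring

lemma tch_natDegree_le (d : ℕ) : (Polynomial.Chebyshev.T ℝ (d : ℤ)).natDegree ≤ d := by
  induction d using Nat.twoStepInduction with
  | zero => simp [Polynomial.Chebyshev.T_zero]
  | one => simp [Polynomial.Chebyshev.T_one]
  | more n ih1 ih2 =>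
    have h : ((n + 2 : ℕ) : ℤ) = (n : ℤ) + 2 := by push_cast; ring
    rw [h, Polynomial.Chebyshev.T_add_two]
    apply le_trans (natDegree_sub_le _ _)
    have hX : (2 * X * Polynomial.Chebyshev.T ℝ ((n : ℤ) + 1)).natDegree ≤ n + 2 := by
      apply le_trans (natDegree_mul_le)
      have h2 : (2 * X : ℝ[X]).natDegree ≤ 1 := by
        apply le_trans (natDegree_mul_le)
        simp
      have h3 : (Polynomial.Chebyshev.T ℝ ((n : ℤ) + 1)).natDegree ≤ n + 1 := by
        rwa [show ((n : ℤ) + 1) = ((n + 1 : ℕ) : ℤ) by push_cast; ring]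
      omega
    have h4 : (Polynomial.Chebyshev.T ℝ (n : ℤ)).natDegree ≤ n + 2 :=
      le_trans ih1 (by omega)
    omega

/-- lower bound on the Chebyshev gain factor -/
lemma gain_bound {μ L : ℝ} (hμ : 0 < μ) (hL : 2 * μ ≤ L) :
    let a := (L + μ) / (L - μ)
    1 + 2 / Real.sqrt (L / μ) ≤ a + Real.sqrt (a ^ 2 - 1) := by
  intro a
  have hμL : μ < L := by linarith
  have hden : 0 < L - μ := by linarith
  have hL0 : 0 < L := by linarith
  set u := Real.sqrt L with hu_def
  set v := Real.sqrt μ with hv_def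
  have hu : u ^ 2 = L := Real.sq_sqrt hL0.le
  have hv : v ^ 2 = μ := Real.sq_sqrt hμ.le
  have hv0 : 0 < v := Real.sqrt_pos.2 hμ
  have huv : v < u := by
    rw [hu_def, hv_def]
    exact Real.sqrt_lt_sqrt hμ.le hμL
  have hκ : Real.sqrt (L / μ) = u / v := Real.sqrt_div hL0.le μ
  have hs : Real.sqrt (a ^ 2 - 1) = 2 * u * v / (L - μ) := by
    have h1 : a ^ 2 - 1 = (2 * u * v / (L - μ)) ^ 2 := by
      show ((L + μ) / (L - μ)) ^ 2 - 1 = _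
      field_simp
      nlinarith [hu, hv]
    rw [h1, Real.sqrt_sq (by positivity)]
  rw [hs, hκ]
  have key : a + 2 * u * v / (L - μ) = (u + v) / (u - v) := by
    show (L + μ) / (L - μ) + _ = _
    rw [← hu, ← hv]
    have huv2 : u ^ 2 - v ^ 2 ≠ 0 := by nlinarith
    have huv3 : u - v ≠ 0 := by intro h; apply huv2; nlinarith
    field_simp
    ring
  rw [key]
  have h2 : 1 + 2 / (u / v) = (u + 2 * v) / u := by
    field_simp
    rw [one_add_div (by linarith : u ≠ 0)]
  rw [h2, div_le_div_iff₀ (by positivity) (by linarith)]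
  nlinarith

lemma interval_poly (μ L : ℝ) (hμ : 0 < μ) (hL : 2 * μ ≤ L) (d : ℕ) :
    ∃ p : ℝ[X],
      p.eval 0 = 1 ∧
      p.natDegree ≤ d ∧
      (∀ x ∈ Set.Icc (0:ℝ) μ, |p.eval x| ≤ 1) ∧
      (∀ x ∈ Set.Icc μ L, |p.eval x| ≤ 2 * Real.exp (-((d : ℝ) / (2 * Real.sqrt (L / μ))))) ∧
      (∀ x, L ≤ x → |p.eval x| ≤ (4 * x / μ) ^ d) := by
  have hμL : μ < L := by linarith
  have hden : 0 < L - μ := by linarith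
  have hL0 : 0 < L := by linarith
  set a : ℝ := (L + μ) / (L - μ) with ha_def
  have ha1 : 1 < a := by
    rw [ha_def, lt_div_iff₀ hden]; linarith
  set w : ℝ → ℝ := fun x => (L + μ - 2 * x) / (L - μ) with hw_def
  set q : ℝ[X] := (Polynomial.Chebyshev.T ℝ (d : ℤ)).comp
      (Polynomial.C a - Polynomial.C (2 / (L - μ)) * Polynomial.X) with hq_def
  set p : ℝ[X] := Polynomial.C (tch d a)⁻¹ * q with hp_def
  have hta : 1 ≤ tch d a := one_le_tch ha1.le
  have hta0 : 0 < tch d a := by linarith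
  have heval : ∀ x : ℝ, p.eval x = (tch d a)⁻¹ * tch d (w x) := by
    intro x
    have hwx : a - 2 / (L - μ) * x = w x := by
      rw [ha_def, hw_def]; field_simp
    simp only [hp_def, hq_def, eval_mul, eval_C, eval_comp, eval_sub, eval_mul, eval_C, eval_X]
    rw [hwx]; rfl
  refine ⟨p, ?_, ?_, ?_, ?_, ?_⟩
  · rw [heval 0]
    have hw0 : w 0 = a := by simp [hw_def, ha_def]
    rw [hw0]
    exact inv_mul_cancel₀ (ne_of_gt hta0)
  · apply le_trans (natDegree_C_mul_le _ _)
    apply le_trans natDegree_comp_le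
    have h1 : (Polynomial.C a - Polynomial.C (2 / (L - μ)) * Polynomial.X).natDegree ≤ 1 := by
      apply le_trans (natDegree_sub_le _ _)
      simp only [natDegree_C]
      have := natDegree_C_mul_le (2 / (L - μ)) (Polynomial.X (R := ℝ))
      simp only [natDegree_X] at this
      omega
    have h2 := tch_natDegree_le d
    calc (Polynomial.Chebyshev.T ℝ (d : ℤ)).natDegree *
          (Polynomial.C a - Polynomial.C (2 / (L - μ)) * Polynomial.X).natDegree
        ≤ d * 1 := Nat.mul_le_mul h2 h1
      _ = d := by ring
  · -- x ∈ [0, μ] : |p.eval x| ≤ 1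
    rintro x ⟨hx0, hxμ⟩
    rw [heval x, abs_mul, abs_inv, abs_of_pos hta0]
    have hw1 : 1 ≤ w x := by
      rw [hw_def, le_div_iff₀ hden]; simp; linarith
    have hwa : w x ≤ a := by
      rw [hw_def, ha_def, div_le_div_iff₀ hden hden]
      nlinarith
    rw [abs_of_pos (lt_of_lt_of_le one_pos (one_le_tch hw1))]
    rw [inv_mul_le_iff₀ hta0, mul_one]
    exact tch_mono hw1 hwa
  · -- x ∈ [μ, L]
    rintro x ⟨hxμ, hxL⟩
    rw [heval x, abs_mul, abs_inv, abs_of_pos hta0]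
    have hw1 : -1 ≤ w x := by
      rw [hw_def, le_div_iff₀ hden]  -- careful: -1 ≤ y/c ↔ -1 * c ≤ y? le_div_iff : a ≤ b / c ↔ a * c ≤ b
      nlinarith
    have hw2 : w x ≤ 1 := by
      rw [hw_def, div_le_one hden]; linarith
    have h1 : |tch d (w x)| ≤ 1 := abs_tch_le_one hw1 hw2
    have h2 : Real.exp ((d : ℝ) / (2 * Real.sqrt (L / μ))) ≤ 2 * tch d a := by
      have hκ1 : 1 ≤ Real.sqrt (L / μ) := by
        rw [show (1:ℝ) = Real.sqrt 1 by simp]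
        apply Real.sqrt_le_sqrt
        rw [le_div_iff₀ hμ]; linarith
      have hκ0 : 0 < Real.sqrt (L / μ) := by linarith
      set t : ℝ := 2 / Real.sqrt (L / μ) with ht_def
      have ht0 : 0 < t := by positivity
      have ht2 : t ≤ 2 := by
        rw [ht_def, div_le_iff₀ hκ0]; nlinarith
      -- log (1 + t) ≥ t / (1 + t) ≥ t / 3 ≥ 1/(2 √κ) · ... we need d * log(1+t) ≥ d/(2√κ)
      have hlog : 1 / (2 * Real.sqrt (L / μ)) ≤ Real.log (1 + t) := by
        have h3 : Real.log ((1 + t)⁻¹) ≤ (1 + t)⁻¹ - 1 :=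
          Real.log_le_sub_one_of_pos (by positivity)
        rw [Real.log_inv] at h3
        have h4 : t / (1 + t) ≤ Real.log (1 + t) := by
          have : (1 + t)⁻¹ - 1 = -(t / (1 + t)) := by field_simp; ring
          rw [this] at h3; linarith
        have h5 : t / 3 ≤ t / (1 + t) := by
          apply div_le_div_of_nonneg_left ht0.le (by linarith) (by linarith)
        have h6 : 1 / (2 * Real.sqrt (L / μ)) ≤ t / 3 := by
          rw [ht_def, div_le_div_iff₀ (by positivity) (by norm_num : (0:ℝ) < 3)]
          have he : 2 / Real.sqrt (L / μ) * (2 * Real.sqrt (L / μ)) = 4 := by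
            field_simp
            ring
          linarith
        linarith
      have hgain := gain_bound hμ hL
      simp only at hgain
      calc Real.exp ((d : ℝ) / (2 * Real.sqrt (L / μ)))
          ≤ Real.exp ((d : ℝ) * Real.log (1 + t)) := by
            apply Real.exp_le_exp.2
            rw [div_eq_mul_one_div]
            exact mul_le_mul_of_nonneg_left hlog (Nat.cast_nonneg d)
        _ = (1 + t) ^ d := by rw [Real.exp_nat_mul, Real.exp_log (by linarith)]
        _ ≤ (a + Real.sqrt (a ^ 2 - 1)) ^ d := by
            apply pow_le_pow_left₀ (by linarith) hgain
        _ ≤ 2 * tch d a := by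
            have := le_tch (d := d) ha1.le
            linarith
    set X : ℝ := (d : ℝ) / (2 * Real.sqrt (L / μ)) with hX_def
    have hE : 0 < Real.exp X := Real.exp_pos _
    have h3 : (tch d a)⁻¹ ≤ 2 * Real.exp (-X) := by
      calc (tch d a)⁻¹ = 1 / tch d a := (inv_eq_one_div _)
        _ ≤ 2 / Real.exp X := by
            rw [div_le_div_iff₀ hta0 hE]; linarith
        _ = 2 * Real.exp (-X) := by rw [Real.exp_neg]; ring
    calc (tch d a)⁻¹ * |tch d (w x)| ≤ (tch d a)⁻¹ * 1 := by
          apply mul_le_mul_of_nonneg_left h1 (by positivity)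
      _ = (tch d a)⁻¹ := mul_one _
      _ ≤ 2 * Real.exp (-X) := h3
  · -- x ≥ L
    intro x hx
    have hx0 : 0 < x := lt_of_lt_of_le hL0 hx
    rw [heval x, abs_mul, abs_inv, abs_of_pos hta0]
    have h1 : 1 ≤ -(w x) := by
      rw [hw_def]
      simp only
      rw [le_neg, div_le_iff₀ hden]
      linarith
    have habs : |tch d (w x)| = tch d (-(w x)) := by
      have : tch d (w x) = (-1) ^ d * tch d (-(w x)) := by
        conv_lhs => rw [show w x = -(-(w x)) by ring, tch_neg_arg]
      rw [this, abs_mul, abs_pow, abs_neg, abs_one, one_pow, one_mul,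
        abs_of_pos (lt_of_lt_of_le one_pos (one_le_tch h1))]
    rw [habs]
    have h2 : tch d (-(w x)) ≤ (4 * x / μ) ^ d := by
      apply le_trans (tch_le_pow h1)
      apply pow_le_pow_left₀ (by linarith)
      have hwle : -(w x) ≤ 2 * x / (L - μ) := by
        rw [hw_def]
        simp only
        rw [neg_div' , div_le_div_iff₀ hden hden]
        nlinarith
      have hle2 : 2 * x / (L - μ) ≤ 2 * x / μ := by
        apply div_le_div_of_nonneg_left (by linarith) hμ (by linarith)
      calc 2 * -(w x) ≤ 2 * (2 * x / μ) := by linarith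
        _ = 4 * x / μ := by ring
    calc (tch d a)⁻¹ * tch d (-(w x)) ≤ 1 * tch d (-(w x)) := by
          apply mul_le_mul_of_nonneg_right _ (by linarith [one_le_tch (d := d) h1])
          rw [inv_le_one_iff₀]
          right; exact hta
      _ = tch d (-(w x)) := one_mul _
      _ ≤ (4 * x / μ) ^ d := h2

noncomputable def degSeq (c g : ℕ → ℝ) (a : ℝ) : ℕ → ℝ
  | 0 => a
  | j + 1 => degSeq c g a j + (⌈c j * degSeq c g a j⌉₊ : ℝ) * g j


end Stmt11Aux

open Stmt11Aux Finset

set_option maxHeartbeats 1000000 in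
/-- Existence of good polynomials for unions of intervals: there is an absolute constant
`C` such that for every `S = ∪_{i<m} [μ_i, L_i]` with `0 < μ_i`, `κ_i = L_i/μ_i ≥ 2`,
`L_i < μ_{i+1}`, and every `ε ∈ (0, 1/2]`, there is a polynomial `P` with `P(0) = 1`,
`|P| ≤ ε` on `S`, and `deg P ≤ Cᵐ · (∏ √κ_i) · (log κ̄)^{m-1} · log(1/ε)`,
where `κ̄ = L_m/μ₁`. -/
theorem stmt11 :
    ∃ C : ℝ, 0 < C ∧
      ∀ (m : ℕ) (μ L : ℕ → ℝ), 0 < m →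
        (∀ i < m, 0 < μ i) →
        (∀ i < m, 2 * μ i ≤ L i) →
        (∀ i, i + 1 < m → L i < μ (i + 1)) →
        ∀ ε : ℝ, 0 < ε → ε ≤ 1 / 2 →
          ∃ P : Polynomial ℝ,
            P.eval 0 = 1 ∧
            (∀ i < m, ∀ x ∈ Set.Icc (μ i) (L i), |P.eval x| ≤ ε) ∧
            (P.natDegree : ℝ) ≤
              C ^ m * (∏ i ∈ Finset.range m, Real.sqrt (L i / μ i)) *
                Real.log (L (m - 1) / μ 0) ^ (m - 1) * Real.log (1 / ε) := by
  refine ⟨100, by norm_num, ?_⟩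
  intro m μ L hm hμpos hκ hgap ε hε hε2
  have hμL : ∀ i < m, μ i < L i := fun i hi =>
    lt_of_lt_of_le (by linarith [hμpos i hi]) (hκ i hi)
  have horder : ∀ j, j < m → ∀ i, i < j → L i < μ j := by
    intro j
    induction j with
    | zero => intro _ i hi; exact absurd hi (Nat.not_lt_zero i)
    | succ k ih =>
      intro hk1 i hik
      have hkm : k < m := by omega
      rcases Nat.lt_succ_iff_lt_or_eq.mp hik with h | h
      · calc L i < μ k := ih hkm i h
          _ < L k := hμL k hkm
          _ < μ (k + 1) := hgap k hk1
      · subst h; exact hgap i hk1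
  have hm1 : m - 1 < m := Nat.sub_lt hm one_pos
  have hLbar : ∀ i < m, L i ≤ L (m - 1) := by
    intro i hi
    have h1 : i ≤ m - 1 := by omega
    rcases h1.lt_or_eq with h | h
    · exact le_of_lt (lt_trans (horder (m - 1) hm1 i h) (hμL (m - 1) hm1))
    · rw [h]
  have hμ0 : ∀ i < m, μ 0 ≤ μ i := by
    intro i hi
    rcases Nat.eq_zero_or_pos i with h | h
    · rw [h]
    · exact le_of_lt (lt_trans (hμL 0 hm) (horder i hi 0 h))
  set Lb : ℝ := L (m - 1) with hLb_def
  have hLb0 : 0 < Lb := lt_trans (hμpos (m - 1) hm1) (hμL (m - 1) hm1)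
  set kb : ℝ := Lb / μ 0 with hkb_def
  have hkb : 2 ≤ kb := by
    have h1 := hκ 0 hm
    have h2 := hLbar 0 hm
    rw [hkb_def, le_div_iff₀ (hμpos 0 hm)]
    linarith
  have hkb0 : 0 < kb := by linarith
  have hlog2 : (0.6931471803 : ℝ) < Real.log 2 := Real.log_two_gt_d9
  have hlogkb : Real.log 2 ≤ Real.log kb := Real.log_le_log (by norm_num) hkb
  set c : ℕ → ℝ := fun j => 2 * Real.sqrt (L j / μ j) with hc_def
  set g : ℕ → ℝ := fun j => Real.log (4 * Lb / μ j) with hg_def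
  set A : ℝ := Real.log (2 / ε) with hA_def
  set Xs : ℕ → ℝ := degSeq c g A with hXs_def
  set dd : ℕ → ℕ := fun j => ⌈c j * Xs j⌉₊ with hdd_def
  have hX0 : Xs 0 = A := rfl
  have hXsucc : ∀ j, Xs (j + 1) = Xs j + (dd j : ℝ) * g j := fun j => rfl
  have hexp1 : Real.exp 1 < 2.7182818286 := Real.exp_one_lt_d9
  have hA1 : 1 ≤ A := by
    rw [hA_def, Real.le_log_iff_exp_le (div_pos (by norm_num) hε)]
    have h4 : (4 : ℝ) ≤ 2 / ε := by rw [le_div_iff₀ hε]; linarith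
    linarith
  have hsq1 : ∀ j < m, 1 ≤ Real.sqrt (L j / μ j) := by
    intro j hj
    rw [show (1 : ℝ) = Real.sqrt 1 by simp]
    apply Real.sqrt_le_sqrt
    rw [le_div_iff₀ (hμpos j hj)]
    linarith [hκ j hj, hμpos j hj]
  have hg1 : ∀ j < m, 1 ≤ g j := by
    intro j hj
    have hμjLb : μ j ≤ Lb := le_of_lt (lt_of_lt_of_le (hμL j hj) (hLbar j hj))
    rw [hg_def]
    simp only
    rw [Real.le_log_iff_exp_le (div_pos (by linarith [hμpos j hj]) (hμpos j hj))]
    rw [le_div_iff₀ (hμpos j hj)]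
    nlinarith [hμpos j hj]
  have hXpos : ∀ j, j ≤ m → 1 ≤ Xs j := by
    intro j
    induction j with
    | zero => intro _; rw [hX0]; exact hA1
    | succ k ih =>
      intro hk
      have h1 := ih (by omega)
      have h2 := hg1 k (by omega)
      have h3 : (0 : ℝ) ≤ (dd k : ℝ) * g k := mul_nonneg (Nat.cast_nonneg _) (by linarith)
      rw [hXsucc k]; linarith
  have hdlow : ∀ j, c j * Xs j ≤ (dd j : ℝ) := fun j => Nat.le_ceil _
  have hdup : ∀ j < m, (dd j : ℝ) ≤ 3 * Real.sqrt (L j / μ j) * Xs j := by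
    intro j hj
    have hs1 := hsq1 j hj
    have hx1 := hXpos j hj.le
    have hc0 : (0 : ℝ) ≤ c j * Xs j := by
      rw [hc_def]; positivity
    have h1 : (dd j : ℝ) < c j * Xs j + 1 := Nat.ceil_lt_add_one hc0
    rw [hc_def] at h1
    simp only at h1
    nlinarith
  have hsum : ∀ j, ∑ i ∈ Finset.range j, (dd i : ℝ) * g i = Xs j - A := by
    intro j
    induction j with
    | zero => simp [hX0]
    | succ k ih => rw [Finset.sum_range_succ, ih, hXsucc]; ring
  -- choose interval polynomials
  have Hex : ∀ i, ∃ p : ℝ[X], p.eval 0 = 1 ∧ p.natDegree ≤ dd i ∧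
      (i < m → (∀ x ∈ Set.Icc (0:ℝ) (μ i), |p.eval x| ≤ 1) ∧
        (∀ x ∈ Set.Icc (μ i) (L i),
          |p.eval x| ≤ 2 * Real.exp (-((dd i : ℝ) / (2 * Real.sqrt (L i / μ i))))) ∧
        (∀ x, L i ≤ x → |p.eval x| ≤ (4 * x / μ i) ^ (dd i))) := by
    intro i
    by_cases hi : i < m
    · obtain ⟨p, h0, hdeg, h3, h4, h5⟩ := interval_poly (μ i) (L i) (hμpos i hi) (hκ i hi) (dd i)
      exact ⟨p, h0, hdeg, fun _ => ⟨h3, h4, h5⟩⟩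
    · exact ⟨1, by simp, by simp, fun h => absurd h hi⟩
  choose p hp0 hpdeg hpbnd using Hex
  refine ⟨∏ i ∈ Finset.range m, p i, ?_, ?_, ?_⟩
  · rw [eval_prod]
    exact Finset.prod_eq_one fun i _ => hp0 i
  · -- smallness on S
    intro j hj x hx
    obtain ⟨hx1, hx2⟩ := Set.mem_Icc.mp hx
    have hx0 : 0 < x := lt_of_lt_of_le (hμpos j hj) hx1
    rw [eval_prod, Finset.abs_prod]
    rw [← Finset.prod_range_mul_prod_Ico _ (show j + 1 ≤ m from hj), Finset.prod_range_succ]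
    have hB1 : ∏ i ∈ Finset.range j, |(p i).eval x| ≤ Real.exp (Xs j - A) := by
      have hterm : ∀ i ∈ Finset.range j, |(p i).eval x| ≤ Real.exp ((dd i : ℝ) * g i) := by
        intro i hi
        have hij : i < j := Finset.mem_range.mp hi
        have him : i < m := lt_trans hij hj
        have hLix : L i ≤ x := le_trans (horder j hj i hij).le hx1
        obtain ⟨_, _, h5⟩ := hpbnd i him
        have h6 := h5 x hLix
        have hxLb : x ≤ Lb := le_trans hx2 (hLbar j hj)
        have hμi : 0 < μ i := hμpos i him
        have h7 : (4 * x / μ i) ^ (dd i) ≤ (4 * Lb / μ i) ^ (dd i) := by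
          apply pow_le_pow_left₀ (div_nonneg (by linarith) hμi.le)
          exact (div_le_div_iff_of_pos_right hμi).2 (by linarith)
        have h8 : (4 * Lb / μ i) ^ (dd i) = Real.exp ((dd i : ℝ) * g i) := by
          rw [hg_def]
          simp only
          rw [Real.exp_nat_mul, Real.exp_log (div_pos (by linarith) hμi)]
        rw [h8] at h7
        linarith
      calc ∏ i ∈ Finset.range j, |(p i).eval x|
          ≤ ∏ i ∈ Finset.range j, Real.exp ((dd i : ℝ) * g i) :=
            Finset.prod_le_prod (fun i _ => abs_nonneg _) hterm
        _ = Real.exp (∑ i ∈ Finset.range j, (dd i : ℝ) * g i) := (Real.exp_sum _ _).symm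
        _ = Real.exp (Xs j - A) := by rw [hsum j]
    have hB2 : |(p j).eval x| ≤ 2 * Real.exp (-(Xs j)) := by
      obtain ⟨_, h4, _⟩ := hpbnd j hj
      have h6 := h4 x ⟨hx1, hx2⟩
      have hs0 : (0 : ℝ) < 2 * Real.sqrt (L j / μ j) := by
        have := hsq1 j hj; linarith
      have h7 : Xs j ≤ (dd j : ℝ) / (2 * Real.sqrt (L j / μ j)) := by
        rw [le_div_iff₀ hs0]
        have := hdlow j
        rw [hc_def] at this
        simp only at this
        linarith [this]
      have h8 : Real.exp (-((dd j : ℝ) / (2 * Real.sqrt (L j / μ j)))) ≤ Real.exp (-(Xs j)) :=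
        Real.exp_le_exp.2 (by linarith)
      linarith
    have hB3 : ∏ i ∈ Finset.Ico (j + 1) m, |(p i).eval x| ≤ 1 := by
      apply Finset.prod_le_one (fun i _ => abs_nonneg _)
      intro i hi
      obtain ⟨hi1, hi2⟩ := Finset.mem_Ico.mp hi
      obtain ⟨h3, _, _⟩ := hpbnd i hi2
      exact h3 x ⟨hx0.le, le_of_lt (lt_of_le_of_lt hx2 (horder i hi2 j (by omega)))⟩
    have hnn1 : (0 : ℝ) ≤ ∏ i ∈ Finset.range j, |(p i).eval x| :=
      Finset.prod_nonneg fun i _ => abs_nonneg _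
    calc (∏ i ∈ Finset.range j, |(p i).eval x|) * |(p j).eval x| *
          ∏ i ∈ Finset.Ico (j + 1) m, |(p i).eval x|
        ≤ Real.exp (Xs j - A) * (2 * Real.exp (-(Xs j))) * 1 := by
          apply mul_le_mul _ hB3 (Finset.prod_nonneg fun i _ => abs_nonneg _) (by positivity)
          exact mul_le_mul hB1 hB2 (abs_nonneg _) (Real.exp_nonneg _)
      _ = 2 * Real.exp (-A) := by
          rw [mul_one]
          rw [show Real.exp (Xs j - A) * (2 * Real.exp (-(Xs j)))
            = 2 * (Real.exp (Xs j - A) * Real.exp (-(Xs j))) by ring, ← Real.exp_add]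
          ring_nf
      _ = ε := by
          rw [hA_def, Real.exp_neg, Real.exp_log (div_pos (by norm_num) hε), inv_div]
          ring
  · -- degree bound
    set G : ℝ := 3 * Real.log kb with hG_def
    have hG2 : 2 ≤ G := by rw [hG_def]; linarith
    have hG0 : 0 < G := by linarith
    have hgG : ∀ j < m, g j ≤ G := by
      intro j hj
      have hμj := hμpos j hj
      rw [hg_def, hG_def]
      simp only
      have h1 : Real.log (4 * Lb / μ j) = Real.log 4 + Real.log (Lb / μ j) := by
        rw [show 4 * Lb / μ j = 4 * (Lb / μ j) by ring,
          Real.log_mul (by norm_num) (ne_of_gt (div_pos hLb0 hμj))]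
      have h2 : Real.log (Lb / μ j) ≤ Real.log kb := by
        apply Real.log_le_log (div_pos hLb0 hμj)
        rw [hkb_def]
        exact div_le_div_of_nonneg_left hLb0.le (hμpos 0 hm) (hμ0 j hj)
      have h3 : Real.log 4 ≤ 2 * Real.log kb := by
        rw [show (4 : ℝ) = 2 ^ 2 by norm_num, Real.log_pow]
        push_cast
        linarith
      linarith
    have hgrow : ∀ j, j ≤ m →
        Xs j ≤ A * ∏ i ∈ Finset.range j, (4 * G * Real.sqrt (L i / μ i)) := by
      intro j
      induction j with
      | zero => intro _; simp [hX0]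
      | succ k ih =>
        intro hk
        have hkm : k < m := by omega
        have hs1 := hsq1 k hkm
        have hx1 := hXpos k (by omega)
        have hQ0 : (0 : ℝ) ≤ ∏ i ∈ Finset.range k, (4 * G * Real.sqrt (L i / μ i)) := by
          apply Finset.prod_nonneg
          intro i _
          exact mul_nonneg (by linarith) (Real.sqrt_nonneg _)
        rw [hXsucc, Finset.prod_range_succ]
        have h1 : (dd k : ℝ) * g k ≤ 3 * Real.sqrt (L k / μ k) * Xs k * G := by
          apply mul_le_mul (hdup k hkm) (hgG k hkm) (by linarith [hg1 k hkm])
          nlinarith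
        have hGs : 2 ≤ G * Real.sqrt (L k / μ k) := by nlinarith
        have h2 : Xs k + (dd k : ℝ) * g k ≤ Xs k * (4 * G * Real.sqrt (L k / μ k)) := by
          nlinarith [mul_nonneg (mul_nonneg (by linarith : (0:ℝ) ≤ Xs k)
            (by linarith : (0:ℝ) ≤ G)) (Real.sqrt_nonneg (L k / μ k))]
        calc Xs k + (dd k : ℝ) * g k ≤ Xs k * (4 * G * Real.sqrt (L k / μ k)) := h2
          _ ≤ (A * ∏ i ∈ Finset.range k, (4 * G * Real.sqrt (L i / μ i))) *
              (4 * G * Real.sqrt (L k / μ k)) := by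
              apply mul_le_mul_of_nonneg_right (ih (by omega))
              exact mul_nonneg (by linarith) (Real.sqrt_nonneg _)
          _ = A * ((∏ i ∈ Finset.range k, (4 * G * Real.sqrt (L i / μ i))) *
              (4 * G * Real.sqrt (L k / μ k))) := by ring
    have hfac : ∀ i < m, 1 ≤ 4 * G * Real.sqrt (L i / μ i) := by
      intro i hi
      nlinarith [hsq1 i hi]
    set Pr : ℝ := ∏ i ∈ Finset.range m, Real.sqrt (L i / μ i) with hPr_def
    have hPr1 : 1 ≤ Pr := by
      rw [hPr_def]
      calc (1:ℝ) = ∏ _i ∈ Finset.range m, (1:ℝ) := by simp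
        _ ≤ ∏ i ∈ Finset.range m, Real.sqrt (L i / μ i) :=
            Finset.prod_le_prod (by simp) fun i hi => hsq1 i (Finset.mem_range.mp hi)
    have hQm : ∏ i ∈ Finset.range m, (4 * G * Real.sqrt (L i / μ i)) = (4 * G) ^ m * Pr := by
      rw [Finset.prod_mul_distrib, Finset.prod_const, Finset.card_range, hPr_def]
    have hdd2 : ∀ i < m, (dd i : ℝ) ≤ (1 / G) * (A * ((4 * G) ^ m * Pr)) := by
      intro i hi
      have hs1 := hsq1 i hi
      have e1 := hdup i hi
      have e2 := hgrow i hi.le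
      have hQi0 : (0 : ℝ) ≤ ∏ l ∈ Finset.range i, (4 * G * Real.sqrt (L l / μ l)) := by
        apply Finset.prod_nonneg; intro l _
        exact mul_nonneg (by linarith) (Real.sqrt_nonneg _)
      have e3 : 3 * Real.sqrt (L i / μ i) * Xs i
          ≤ 3 * Real.sqrt (L i / μ i) * (A * ∏ l ∈ Finset.range i,
              (4 * G * Real.sqrt (L l / μ l))) := by
        apply mul_le_mul_of_nonneg_left e2 (by positivity)
      have e4 : 3 * Real.sqrt (L i / μ i) * (A * ∏ l ∈ Finset.range i,
            (4 * G * Real.sqrt (L l / μ l)))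
          ≤ (1 / G) * (A * ∏ l ∈ Finset.range (i + 1),
              (4 * G * Real.sqrt (L l / μ l))) := by
        rw [Finset.prod_range_succ]
        have heq : (1 / G) * (A * ((∏ l ∈ Finset.range i, (4 * G * Real.sqrt (L l / μ l))) *
            (4 * G * Real.sqrt (L i / μ i))))
            = 4 * Real.sqrt (L i / μ i) * (A * ∏ l ∈ Finset.range i,
              (4 * G * Real.sqrt (L l / μ l))) := by
          field_simp [hG0.ne']
        rw [heq]
        have hAQ : (0 : ℝ) ≤ A * ∏ l ∈ Finset.range i, (4 * G * Real.sqrt (L l / μ l)) := by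
          apply mul_nonneg (by linarith) hQi0
        nlinarith
      have e5 : ∏ l ∈ Finset.range (i + 1), (4 * G * Real.sqrt (L l / μ l))
          ≤ ∏ l ∈ Finset.range m, (4 * G * Real.sqrt (L l / μ l)) := by
        rw [← Finset.prod_range_mul_prod_Ico _ (show i + 1 ≤ m by omega)]
        have e51 : (1:ℝ) ≤ ∏ l ∈ Finset.Ico (i + 1) m, (4 * G * Real.sqrt (L l / μ l)) := by
          calc (1:ℝ) = ∏ _l ∈ Finset.Ico (i + 1) m, (1:ℝ) := by simp
            _ ≤ ∏ l ∈ Finset.Ico (i + 1) m, (4 * G * Real.sqrt (L l / μ l)) :=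
                Finset.prod_le_prod (by simp) fun l hl =>
                  hfac l (Finset.mem_Ico.mp hl).2
        have e52 : (0:ℝ) ≤ ∏ l ∈ Finset.range (i + 1), (4 * G * Real.sqrt (L l / μ l)) :=
          Finset.prod_nonneg fun l _ => mul_nonneg (by linarith) (Real.sqrt_nonneg _)
        exact le_mul_of_one_le_right e52 e51
      have e6 : (1 / G) * (A * ∏ l ∈ Finset.range (i + 1), (4 * G * Real.sqrt (L l / μ l)))
          ≤ (1 / G) * (A * ∏ l ∈ Finset.range m, (4 * G * Real.sqrt (L l / μ l))) := by
        apply mul_le_mul_of_nonneg_left _ (one_div_nonneg.2 hG0.le)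
        apply mul_le_mul_of_nonneg_left e5 (by linarith)
      rw [hQm] at e6
      linarith
    have hNdeg : ((∏ i ∈ Finset.range m, p i).natDegree : ℝ)
        ≤ ∑ i ∈ Finset.range m, (dd i : ℝ) := by
      have h1 := Polynomial.natDegree_prod_le (Finset.range m) p
      have h2 : ∑ i ∈ Finset.range m, (p i).natDegree ≤ ∑ i ∈ Finset.range m, dd i :=
        Finset.sum_le_sum fun i _ => hpdeg i
      have h3 := le_trans h1 h2
      calc ((∏ i ∈ Finset.range m, p i).natDegree : ℝ)
          ≤ ((∑ i ∈ Finset.range m, dd i : ℕ) : ℝ) := by exact_mod_cast h3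
        _ = ∑ i ∈ Finset.range m, (dd i : ℝ) := by push_cast; rfl
    have hsumdd : ∑ i ∈ Finset.range m, (dd i : ℝ)
        ≤ (m : ℝ) * ((1 / G) * (A * ((4 * G) ^ m * Pr))) := by
      calc ∑ i ∈ Finset.range m, (dd i : ℝ)
          ≤ ∑ _i ∈ Finset.range m, (1 / G) * (A * ((4 * G) ^ m * Pr)) :=
            Finset.sum_le_sum fun i hi => hdd2 i (Finset.mem_range.mp hi)
        _ = (m : ℝ) * ((1 / G) * (A * ((4 * G) ^ m * Pr))) := by
            rw [Finset.sum_const, Finset.card_range, nsmul_eq_mul]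
    have hm' : m - 1 + 1 = m := Nat.succ_pred_eq_of_pos hm
    have hkey : (m : ℝ) * ((1 / G) * (A * ((4 * G) ^ m * Pr)))
        = (m : ℝ) * (4 ^ m * G ^ (m - 1) * (A * Pr)) := by
      have hGm : (4 * G) ^ m = 4 ^ m * (G ^ (m - 1) * G) := by
        rw [mul_pow, ← pow_succ, hm']
      rw [hGm]
      field_simp [hG0.ne']
    set lge : ℝ := Real.log (1 / ε) with hlge_def
    have hle2 : Real.log 2 ≤ lge := by
      rw [hlge_def]
      apply Real.log_le_log (by norm_num)
      rw [le_div_iff₀ hε]; linarith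
    have hle0 : 0 < lge := by linarith
    have hA2 : A ≤ 2 * lge := by
      rw [hA_def, hlge_def, show (2 : ℝ) / ε = 2 * (1 / ε) by ring,
        Real.log_mul (by norm_num) (one_div_ne_zero hε.ne')]
      linarith
    have hmle : (m : ℝ) ≤ 2 ^ m := by exact_mod_cast (Nat.lt_two_pow_self (n := m)).le
    set lk : ℝ := Real.log kb with hlk_def
    have hlk0 : 0 < lk := by rw [hlk_def]; linarith
    have hGeq : G ^ (m - 1) = 3 ^ (m - 1) * lk ^ (m - 1) := by
      rw [hG_def, hlk_def, mul_pow]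
    have hcoef : (2 : ℝ) ^ m * 4 ^ m * (3 ^ (m - 1) * 2) ≤ 100 ^ m := by
      have h24 : (0 : ℝ) ≤ 2 ^ m * 4 ^ m := by positivity
      have h1 : (3 : ℝ) ^ (m - 1) * 2 ≤ 3 ^ (m - 1) * 3 := by
        apply mul_le_mul_of_nonneg_left (by norm_num) (by positivity)
      have h2 : (3 : ℝ) ^ (m - 1) * 3 = 3 ^ m := by rw [← pow_succ, hm']
      have h3 : (2 : ℝ) ^ m * 4 ^ m * 3 ^ m = 24 ^ m := by
        rw [← mul_pow, ← mul_pow]; norm_num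
      have h4 : (24 : ℝ) ^ m ≤ 100 ^ m := pow_le_pow_left₀ (by norm_num) (by norm_num) m
      nlinarith
    calc ((∏ i ∈ Finset.range m, p i).natDegree : ℝ)
        ≤ (m : ℝ) * (4 ^ m * G ^ (m - 1) * (A * Pr)) := by
          rw [← hkey]; linarith
      _ ≤ (2 ^ m : ℝ) * (4 ^ m * (3 ^ (m - 1) * lk ^ (m - 1)) * ((2 * lge) * Pr)) := by
          rw [hGeq]
          have hAle : A * Pr ≤ (2 * lge) * Pr := mul_le_mul_of_nonneg_right hA2 (by linarith)
          have hfin : (4 : ℝ) ^ m * (3 ^ (m - 1) * lk ^ (m - 1)) * (A * Pr)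
              ≤ 4 ^ m * (3 ^ (m - 1) * lk ^ (m - 1)) * ((2 * lge) * Pr) := by
            apply mul_le_mul_of_nonneg_left hAle
              (mul_nonneg (by positivity) (mul_nonneg (by positivity) (pow_nonneg hlk0.le _)))
          have hlkp : (0:ℝ) ≤ lk ^ (m - 1) := pow_nonneg hlk0.le _
          have hAP0 : (0 : ℝ) ≤ 4 ^ m * (3 ^ (m - 1) * lk ^ (m - 1)) * (A * Pr) := by
            apply mul_nonneg
            · exact mul_nonneg (by positivity) (mul_nonneg (by positivity) hlkp)
            · exact mul_nonneg (by linarith) (by linarith)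
          calc (m : ℝ) * (4 ^ m * (3 ^ (m - 1) * lk ^ (m - 1)) * (A * Pr))
              ≤ (2 ^ m : ℝ) * (4 ^ m * (3 ^ (m - 1) * lk ^ (m - 1)) * (A * Pr)) :=
                mul_le_mul_of_nonneg_right hmle hAP0
            _ ≤ (2 ^ m : ℝ) * (4 ^ m * (3 ^ (m - 1) * lk ^ (m - 1)) * ((2 * lge) * Pr)) :=
                mul_le_mul_of_nonneg_left hfin (by positivity)

      _ ≤ (100 : ℝ) ^ m * Pr * lk ^ (m - 1) * lge := by
          have hrest : (0 : ℝ) ≤ lk ^ (m - 1) * lge * Pr :=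
            mul_nonneg (mul_nonneg (pow_nonneg hlk0.le _) hle0.le) (by linarith)
          have heq1 : (2 ^ m : ℝ) * (4 ^ m * (3 ^ (m - 1) * lk ^ (m - 1)) * ((2 * lge) * Pr))
              = (2 ^ m * 4 ^ m * (3 ^ (m - 1) * 2)) * (lk ^ (m - 1) * lge * Pr) := by ring
          have heq2 : (100 : ℝ) ^ m * Pr * lk ^ (m - 1) * lge
              = (100 : ℝ) ^ m * (lk ^ (m - 1) * lge * Pr) := by ring
          rw [heq1, heq2]
          exact mul_le_mul_of_nonneg_right hcoef hrest
end

section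
/- Let λ₁, ..., λ_n be distinct positive reals and v₁, ..., v_n positive reals with Σv_i² = 1. Then there exists an orthogonal matrix Q ∈ ℝ^{n×n} such that Q·e₁ = v (the vector with entries v_i) and QᵀΛQ is a non-degenerate symmetric tridiagonal matrix, where Λ = diag(λ₁, ..., λ_n) and non-degenerate means all sub-diagonal entries are nonzero. -/
open Matrix Submodule Set InnerProductSpace

/-- Tridiagonalization with prescribed first column: given distinct positive `λ_i` and
positive weights `v_i` with `Σ v_i² = 1`, there is an orthogonal matrix `Q` whose first
column is `v` and such that `QᵀΛQ` is a non-degenerate symmetric tridiagonal matrix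
(all sub-diagonal entries nonzero), where `Λ = diag(λ)`. -/
theorem stmt12 (n : ℕ) (hn : 0 < n) (lam v : Fin n → ℝ)
    (hlam_pos : ∀ i, 0 < lam i) (hlam_inj : Function.Injective lam)
    (hv : ∀ i, 0 < v i) (hnorm : ∑ i, v i ^ 2 = 1) :
    ∃ Q : Matrix (Fin n) (Fin n) ℝ,
      Qᵀ * Q = 1 ∧
      (∀ i, Q i ⟨0, hn⟩ = v i) ∧
      (∀ i j : Fin n, (i : ℕ) + 1 < (j : ℕ) →
        (Qᵀ * Matrix.diagonal lam * Q) i j = 0 ∧ (Qᵀ * Matrix.diagonal lam * Q) j i = 0) ∧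
      (∀ i j : Fin n, (j : ℕ) = (i : ℕ) + 1 →
        (Qᵀ * Matrix.diagonal lam * Q) i j ≠ 0) := by
  classical
  haveI : NeZero n := ⟨hn.ne'⟩
  haveI : WellFoundedLT (Fin n) := inferInstance
  set f : Fin n → EuclideanSpace ℝ (Fin n) := fun i => WithLp.toLp 2 (fun j => lam j ^ (i : ℕ) * v j) with hf
  -- linear independence of the Krylov family
  have hM : LinearIndependent ℝ f := by
    have h1 : LinearIndependent ℝ (fun i => ((Matrix.vandermonde lam)ᵀ * Matrix.diagonal v) i) := by
      show LinearIndependent ℝ ((Matrix.vandermonde lam)ᵀ * Matrix.diagonal v).row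
      rw [Matrix.linearIndependent_rows_iff_isUnit, Matrix.isUnit_iff_isUnit_det,
        isUnit_iff_ne_zero, Matrix.det_mul, Matrix.det_transpose, Matrix.det_vandermonde,
        Matrix.det_diagonal]
      refine mul_ne_zero (Finset.prod_ne_zero_iff.2 fun i _ => Finset.prod_ne_zero_iff.2
        fun j hj => sub_ne_zero.2 fun h => ?_) (Finset.prod_ne_zero_iff.2 fun i _ => (hv i).ne')
      have := hlam_inj h
      simp [Finset.mem_filter] at hj
      omega
    have h2 : (fun i => ((Matrix.vandermonde lam)ᵀ * Matrix.diagonal v) i)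
        = fun (i : Fin n) j => lam j ^ (i : ℕ) * v j := by
      funext i j
      simp [Matrix.mul_apply, Matrix.vandermonde, Matrix.diagonal, Finset.sum_ite_eq, mul_comm]
    rw [h2] at h1
    exact h1.map' (WithLp.linearEquiv 2 ℝ (Fin n → ℝ)).symm.toLinearMap (LinearEquiv.ker _)
  set b : Fin n → EuclideanSpace ℝ (Fin n) := gramSchmidtNormed ℝ f with hb
  have hb_on : Orthonormal ℝ b := gramSchmidtNormed_orthonormal hM
  have hb_ite : ∀ i k : Fin n, (inner ℝ (b i) (b k) : ℝ) = if i = k then 1 else 0 :=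
    orthonormal_iff_ite.mp hb_on
  -- the multiplication operator
  set L : EuclideanSpace ℝ (Fin n) →ₗ[ℝ] EuclideanSpace ℝ (Fin n) :=
    { toFun := fun x => WithLp.toLp 2 (fun j => lam j * x j)
      map_add' := by
        intro x y; ext j; simp only [PiLp.add_apply, PiLp.toLp_apply]; ring
      map_smul' := by
        intro c x; ext j
        simp only [PiLp.toLp_apply, PiLp.smul_apply, smul_eq_mul, RingHom.id_apply]; ring } with hL
  have hLapp : ∀ (x : EuclideanSpace ℝ (Fin n)) (j : Fin n), L x j = lam j * x j :=
    fun x j => rfl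
  have hLf : ∀ (k : Fin n) (hk : (k : ℕ) + 1 < n), L (f k) = f ⟨(k : ℕ) + 1, hk⟩ := by
    intro k hk
    ext j
    show lam j * (lam j ^ (k : ℕ) * v j) = lam j ^ ((k : ℕ) + 1) * v j
    ring
  -- orthogonality helper
  have horth : ∀ (s : Set (Fin n)) (j : Fin n), j ∉ s →
      ∀ x ∈ span ℝ (b '' s), (inner ℝ (b j) x : ℝ) = 0 := by
    intro s j hj x hx
    induction hx using Submodule.span_induction with
    | mem x hx =>
        obtain ⟨k, hk, rfl⟩ := hx
        exact hb_on.2 (fun h : j = k => hj (h ▸ hk))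
    | zero => simp
    | add x y _ _ hx hy => rw [inner_add_right, hx, hy, add_zero]
    | smul c x _ hx => rw [inner_smul_right, hx, mul_zero]
  -- span identities
  have hspan_Iic : ∀ c : Fin n, span ℝ (b '' Iic c) = span ℝ (f '' Iic c) := by
    intro c; rw [hb, span_gramSchmidtNormed, span_gramSchmidt_Iic]
  have hspan_Iio : ∀ c : Fin n, span ℝ (b '' Iio c) = span ℝ (f '' Iio c) := by
    intro c; rw [hb, span_gramSchmidtNormed, span_gramSchmidt_Iio]
  have hb_mem : ∀ i : Fin n, b i ∈ span ℝ (f '' Iic i) := by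
    intro i
    rw [← hspan_Iic]
    exact subset_span ⟨i, mem_Iic.2 le_rfl, rfl⟩
  -- L maps spans upward
  have hLmem : ∀ (i : Fin n) (hi : (i : ℕ) + 1 < n) (x : EuclideanSpace ℝ (Fin n)),
      x ∈ span ℝ (f '' Iic i) → L x ∈ span ℝ (f '' Iic ⟨(i : ℕ) + 1, hi⟩) := by
    intro i hi x hx
    have h1 : L x ∈ Submodule.map L (span ℝ (f '' Iic i)) := Submodule.mem_map_of_mem hx
    rw [Submodule.map_span] at h1
    refine span_le.2 ?_ h1
    rintro _ ⟨_, ⟨k, hk, rfl⟩, rfl⟩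
    have hki : (k : ℕ) ≤ (i : ℕ) := hk
    have hk' : (k : ℕ) + 1 < n := by omega
    refine subset_span ⟨⟨(k : ℕ) + 1, hk'⟩, ?_, (hLf k hk').symm⟩
    simp only [mem_Iic, Fin.le_def]
    exact Nat.succ_le_succ hki
  have hLmem' : ∀ (i : Fin n) (x : EuclideanSpace ℝ (Fin n)), x ∈ span ℝ (f '' Iio i) →
      L x ∈ span ℝ (f '' Iic i) := by
    intro i x hx
    have h1 : L x ∈ Submodule.map L (span ℝ (f '' Iio i)) := Submodule.mem_map_of_mem hx
    rw [Submodule.map_span] at h1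
    refine span_le.2 ?_ h1
    rintro _ ⟨_, ⟨k, hk, rfl⟩, rfl⟩
    have hki : (k : ℕ) < (i : ℕ) := hk
    have hk' : (k : ℕ) + 1 < n := by have := i.isLt; omega
    refine subset_span ⟨⟨(k : ℕ) + 1, hk'⟩, ?_, (hLf k hk').symm⟩
    simp only [mem_Iic, Fin.le_def]
    omega
  -- key zero lemma
  have hzero : ∀ i j : Fin n, (i : ℕ) + 1 < (j : ℕ) → (inner ℝ (b j) (L (b i)) : ℝ) = 0 := by
    intro i j hij
    have hi1 : (i : ℕ) + 1 < n := lt_trans hij j.isLt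
    have h1 : L (b i) ∈ span ℝ (b '' Iic ⟨(i : ℕ) + 1, hi1⟩) := by
      rw [hspan_Iic]
      exact hLmem i hi1 _ (hb_mem i)
    refine horth _ j ?_ _ h1
    simp only [mem_Iic, Fin.le_def]
    omega
  -- symmetry of L
  have hsym : ∀ x y : EuclideanSpace ℝ (Fin n), (inner ℝ x (L y) : ℝ) = (inner ℝ y (L x) : ℝ) := by
    intro x y
    simp only [PiLp.inner_apply, RCLike.inner_apply, conj_trivial, hLapp]
    exact Finset.sum_congr rfl fun a _ => by ring
  -- the matrix
  set Q : Matrix (Fin n) (Fin n) ℝ := Matrix.of (fun j i => b i j) with hQ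
  have hent : ∀ i j : Fin n, (Qᵀ * Matrix.diagonal lam * Q) i j = (inner ℝ (b i) (L (b j)) : ℝ) := by
    intro i j
    rw [Matrix.mul_assoc]
    simp only [PiLp.inner_apply, RCLike.inner_apply, conj_trivial, hLapp,
      Matrix.mul_apply, Matrix.transpose_apply, hQ, Matrix.of_apply, Matrix.diagonal,
      ite_mul, zero_mul, Finset.sum_ite_eq, Finset.mem_univ, if_pos]
    exact Finset.sum_congr rfl fun _ _ => by ring
  refine ⟨Q, ?_, ?_, ?_, ?_⟩
  · ext i k
    have h1 := hb_ite i k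
    simp only [PiLp.inner_apply, RCLike.inner_apply, conj_trivial] at h1
    simp only [Matrix.mul_apply, Matrix.transpose_apply, hQ, Matrix.of_apply, Matrix.one_apply]
    rw [← h1]; exact Finset.sum_congr rfl fun _ _ => mul_comm _ _
  · -- first column is v
    intro i
    have hbot : (⟨0, hn⟩ : Fin n) = ⊥ := rfl
    have hg0 : gramSchmidt ℝ f ⊥ = f ⊥ := by rw [gramSchmidt_def]; simp
    have hnorm1 : ‖f (⊥ : Fin n)‖ = 1 := by
      rw [EuclideanSpace.norm_eq]
      have h2 : ∀ j, ‖f (⊥ : Fin n) j‖ ^ 2 = v j ^ 2 := by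
        intro j
        have h3 : f (⊥ : Fin n) j = v j := by
          show lam j ^ ((⊥ : Fin n) : ℕ) * v j = v j
          rw [show ((⊥ : Fin n) : ℕ) = 0 from rfl, pow_zero, one_mul]
        rw [h3, Real.norm_eq_abs, sq_abs]
      rw [Finset.sum_congr rfl fun j _ => h2 j, hnorm, Real.sqrt_one]
    have h4 : b ⊥ = f ⊥ := by
      rw [hb, gramSchmidtNormed, hg0, hnorm1]
      simp
    show b ⟨0, hn⟩ i = v i
    rw [hbot, h4]
    show lam i ^ ((⊥ : Fin n) : ℕ) * v i = v i
    rw [show ((⊥ : Fin n) : ℕ) = 0 from rfl, pow_zero, one_mul]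
  · intro i j hij
    constructor
    · rw [hent, hsym]
      exact hzero i j hij
    · rw [hent]
      exact hzero i j hij
  · -- nonzero subdiagonal
    intro i j hij h0
    have hi1 : (i : ℕ) + 1 < n := hij ▸ j.isLt
    have hj : j = ⟨(i : ℕ) + 1, hi1⟩ := Fin.ext hij
    rw [hent, hsym] at h0
    -- decompose b i
    have hbi : b i ∈ span ℝ (insert (f i) (f '' Iio i)) := by
      have h5 := hb_mem i
      rwa [show Iic i = insert i (Iio i) from Set.Iio_insert.symm, Set.image_insert_eq] at h5
    obtain ⟨c, w, hw, hbi_eq⟩ := Submodule.mem_span_insert.mp hbi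
    have hc : c ≠ 0 := by
      intro hc0
      rw [hc0, zero_smul, zero_add] at hbi_eq
      have h6 : (inner ℝ (b i) (b i) : ℝ) = 0 := by
        refine horth (Iio i) i (by simp) _ ?_
        rw [hspan_Iio]
        exact hbi_eq ▸ hw
      rw [hb_ite i i] at h6
      simp at h6
    -- L (b i) lives in span b '' Iic j and is orthogonal to b j
    have hLbi_mem : L (b i) ∈ span ℝ (b '' Iic j) := by
      rw [hspan_Iic, hj]
      exact hLmem i hi1 _ (hb_mem i)
    have hLbi_mem' : L (b i) ∈ span ℝ (b '' Iio j) := by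
      have h2 : L (b i) ∈ span ℝ (insert (b j) (b '' Iio j)) := by
        rwa [show Iic j = insert j (Iio j) from Set.Iio_insert.symm,
          Set.image_insert_eq] at hLbi_mem
      obtain ⟨a, z, hz, heq⟩ := Submodule.mem_span_insert.mp h2
      have ha : a = 0 := by
        have h3 : (inner ℝ (b j) (L (b i)) : ℝ) = a := by
          rw [heq, inner_add_right, inner_smul_right, hb_ite j j,
            horth (Iio j) j (by simp) z hz]
          simp
        rw [h0] at h3
        exact h3.symm
      rw [heq, ha, zero_smul, zero_add]
      exact hz
    -- hence L (b i) ∈ span f '' Iic i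
    have hIio_Iic : Iio j = Iic i := by
      ext k
      simp only [mem_Iio, mem_Iic, Fin.lt_def, Fin.le_def, hij]
      omega
    have hLbi_fi : L (b i) ∈ span ℝ (f '' Iic i) := by
      rw [← hspan_Iic, ← hIio_Iic]
      exact hLbi_mem'
    -- but L (b i) = c • f j + L w
    have hLw : L w ∈ span ℝ (f '' Iic i) := hLmem' i w hw
    have hLbi_eq : L (b i) = c • f j + L w := by
      rw [hbi_eq, map_add, LinearMap.map_smul, hLf i hi1, ← hj]
    have hfj : f j ∈ span ℝ (f '' Iic i) := by
      have h4 : c • f j ∈ span ℝ (f '' Iic i) := by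
        have h5 := Submodule.sub_mem _ hLbi_fi hLw
        rwa [hLbi_eq, add_sub_cancel_right] at h5
      have h6 := Submodule.smul_mem _ c⁻¹ h4
      rwa [smul_smul, inv_mul_cancel₀ hc, one_smul] at h6
    refine hM.notMem_span_image (x := j) (s := Iic i) ?_ hfj
    intro hmem
    rw [mem_Iic, Fin.le_def] at hmem
    omega
end
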